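/- arXiv:2105.07514 — 2 statements merged into one kernel-verified Lean document; each statement's English description precedes it below -/
import Mathlib

section
/- Permutation p-value validity: let G be a finite group acting on a sample space, T a real statistic, and suppose the data X has a G-invariant distribution (X and g·X have the same law for all g ∈ G). Define the permutation p-value p(X) = (1/|G|) · |{g ∈ G : T(g·X) ≥ T(X)}|. Then for every t ∈ [0,1], P(p(X) ≤ t) ≤ t. -/
open MeasureTheory
open scoped Classical
open scoped ENNReal

/-- Validity (superuniformity) of the permutation p-value: if the law of the data X
is invariant under the action of a finite group G and
p(x) = |{g : T(g•x) ≥ T(x)}| / |G|, then P(p(X) ≤ t) ≤ t for all t ∈ [0,1]. -/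
theorem permutation_pvalue_superuniform
    {Ω E : Type*} [MeasurableSpace Ω] [MeasurableSpace E]
    (μ : Measure Ω) [IsProbabilityMeasure μ]
    (G : Type*) [Group G] [Fintype G] [MulAction G E]
    (hmeas : ∀ g : G, Measurable (fun x : E => g • x))
    (X : Ω → E) (hX : Measurable X)
    (hinv : ∀ g : G, Measure.map (fun ω => g • X ω) μ = Measure.map X μ)
    (T : E → ℝ) (hTmeas : Measurable T) :
    ∀ t ∈ Set.Icc (0 : ℝ) 1,
      μ {ω | ((Finset.univ.filter (fun g : G => T (X ω) ≤ T (g • X ω))).card : ℝ) /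
          (Fintype.card G : ℝ) ≤ t} ≤ ENNReal.ofReal t := by
  intro t ht
  obtain ⟨ht0, ht1⟩ := ht
  have hc0 : (0:ℝ) < (Fintype.card G : ℝ) := by
    exact_mod_cast Fintype.card_pos
  set N : E → ℕ := fun x => (Finset.univ.filter (fun g : G => T x ≤ T (g • x))).card with hN
  set p : E → ℝ := fun x => (N x : ℝ) / (Fintype.card G : ℝ) with hp
  show μ {ω | p (X ω) ≤ t} ≤ ENNReal.ofReal t
  -- measurability of p
  have hNmeas : Measurable fun x => (N x : ℝ) := by
    have heq : (fun x => (N x : ℝ)) =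
        fun x => ∑ g : G, if T x ≤ T (g • x) then (1:ℝ) else 0 := by
      funext x
      simp only [hN]
      rw [Finset.card_filter]
      push_cast [apply_ite (fun n : ℕ => (n : ℝ))]
      rfl
    rw [heq]
    exact Finset.measurable_sum _ fun g _ =>
      Measurable.ite (measurableSet_le hTmeas (hTmeas.comp (hmeas g)))
        measurable_const measurable_const
  have hpmeas : Measurable p := hNmeas.div_const _
  have hA : MeasurableSet {x : E | p x ≤ t} := hpmeas measurableSet_Iic
  -- key combinatorial lemma
  have key : ∀ x : E,
      ((Finset.univ.filter (fun g : G => p (g • x) ≤ t)).card : ℝ)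
        ≤ t * (Fintype.card G : ℝ) := by
    intro x
    set S := Finset.univ.filter (fun g : G => p (g • x) ≤ t) with hS
    rcases S.eq_empty_or_nonempty with h | h
    · simp [h]; positivity
    · obtain ⟨g0, hg0S, hg0min⟩ := S.exists_min_image (fun g => T (g • x)) h
      have hcard : S.card ≤ N (g0 • x) := by
        apply Finset.card_le_card_of_injOn (fun g => g * g0⁻¹)
        · intro g hg
          simp only [hN, Finset.mem_coe, Finset.mem_filter, Finset.mem_univ, true_and]
          have hsm : (g * g0⁻¹) • (g0 • x) = g • x := by
            rw [smul_smul, inv_mul_cancel_right]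
          rw [hsm]
          exact hg0min g hg
        · intro a _ b _ hab
          simpa using mul_right_cancel hab
      have hg0 : p (g0 • x) ≤ t := (Finset.mem_filter.mp hg0S).2
      have hNle : (N (g0 • x) : ℝ) ≤ t * (Fintype.card G : ℝ) := by
        rw [hp] at hg0
        exact (div_le_iff₀ hc0).mp hg0
      calc (S.card : ℝ) ≤ (N (g0 • x) : ℝ) := by exact_mod_cast hcard
        _ ≤ t * (Fintype.card G : ℝ) := hNle
  -- measure invariance
  have hBmeas : ∀ g : G, MeasurableSet {ω | p (g • X ω) ≤ t} := by
    intro g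
    exact ((hmeas g).comp hX) hA
  have hBg : ∀ g : G, μ {ω | p (g • X ω) ≤ t} = μ {ω | p (X ω) ≤ t} := by
    intro g
    have hm : Measurable fun ω => g • X ω := (hmeas g).comp hX
    have h1 : μ {ω | p (g • X ω) ≤ t}
        = (Measure.map (fun ω => g • X ω) μ) {x | p x ≤ t} := by
      rw [Measure.map_apply hm hA]; rfl
    rw [h1, hinv g, Measure.map_apply hX hA]; rfl
  -- main estimate
  have hXAmeas : MeasurableSet {ω | p (X ω) ≤ t} := hX hA
  have hsum : (Fintype.card G : ℝ≥0∞) * μ {ω | p (X ω) ≤ t}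
      ≤ ENNReal.ofReal (t * (Fintype.card G : ℝ)) := by
    have h1 : ∑ g : G, μ {ω | p (g • X ω) ≤ t}
        = (Fintype.card G : ℝ≥0∞) * μ {ω | p (X ω) ≤ t} := by
      simp [hBg, Finset.sum_const, nsmul_eq_mul]
    rw [← h1]
    have h2 : ∑ g : G, μ {ω | p (g • X ω) ≤ t}
        = ∫⁻ ω, ∑ g : G, Set.indicator {ω | p (g • X ω) ≤ t} (fun _ => (1:ℝ≥0∞)) ω ∂μ := by
      rw [lintegral_finset_sum _ fun g _ =>
        measurable_const.indicator (hBmeas g)]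
      refine Finset.sum_congr rfl fun g _ => ?_
      rw [lintegral_indicator (hBmeas g)]
      simp
    rw [h2]
    have h3 : ∀ ω, ∑ g : G, Set.indicator {ω | p (g • X ω) ≤ t} (fun _ => (1:ℝ≥0∞)) ω
        ≤ ENNReal.ofReal (t * (Fintype.card G : ℝ)) := by
      intro ω
      have hcount : ∑ g : G, Set.indicator {ω | p (g • X ω) ≤ t} (fun _ => (1:ℝ≥0∞)) ω
          = ((Finset.univ.filter (fun g : G => p (g • X ω) ≤ t)).card : ℝ≥0∞) := by
        rw [Finset.card_filter]
        push_cast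
        apply Finset.sum_congr rfl
        intro g _
        by_cases hg : p (g • X ω) ≤ t
        · simp [Set.indicator_of_mem, hg, Set.mem_setOf_eq]
        · simp [Set.indicator_of_notMem, hg, Set.mem_setOf_eq]
      rw [hcount]
      calc ((Finset.univ.filter (fun g : G => p (g • X ω) ≤ t)).card : ℝ≥0∞)
          = ENNReal.ofReal ((Finset.univ.filter (fun g : G => p (g • X ω) ≤ t)).card : ℝ) := by
            rw [ENNReal.ofReal_natCast]
        _ ≤ ENNReal.ofReal (t * (Fintype.card G : ℝ)) :=
            ENNReal.ofReal_le_ofReal (key (X ω))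
    calc ∫⁻ ω, ∑ g : G, Set.indicator {ω | p (g • X ω) ≤ t} (fun _ => (1:ℝ≥0∞)) ω ∂μ
        ≤ ∫⁻ _, ENNReal.ofReal (t * (Fintype.card G : ℝ)) ∂μ :=
          lintegral_mono h3
      _ = ENNReal.ofReal (t * (Fintype.card G : ℝ)) := by
          simp [lintegral_const]
  have hofReal : ENNReal.ofReal (t * (Fintype.card G : ℝ))
      = ENNReal.ofReal t * (Fintype.card G : ℝ≥0∞) := by
    rw [ENNReal.ofReal_mul ht0, ENNReal.ofReal_natCast]
  rw [hofReal] at hsum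
  have hcne : (Fintype.card G : ℝ≥0∞) ≠ 0 := by
    exact_mod_cast Fintype.card_ne_zero
  have hctop : (Fintype.card G : ℝ≥0∞) ≠ ⊤ := ENNReal.natCast_ne_top _
  rw [mul_comm (ENNReal.ofReal t) _] at hsum
  exact (ENNReal.mul_le_mul_iff_right hcne hctop).mp hsum
end

section
/- Strong FWER control of the Holm procedure: if the p-values of true null hypotheses are superuniform (P(p_i ≤ t) ≤ t for all t), then the Holm step-down procedure at level α makes at least one false rejection with probability at most α, for any configuration of m₀ true nulls among m hypotheses. -/
open MeasureTheory

/-- Strong FWER control of the Holm step-down procedure: with superuniform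
p-values for the true nulls I₀ and the p-values sorted increasingly for each
outcome ω by a permutation σ(ω), Holm rejects hypothesis i iff i = σ(ω) j for
some j with p(σ(ω) j') ≤ α/(m − j') for all j' ≤ j (0-based indexing). The
probability of at least one false rejection is at most α, for any configuration
of true nulls. -/
theorem holm_strong_fwer_control
    {Ω : Type*} [MeasurableSpace Ω] (μ : Measure Ω) [IsProbabilityMeasure μ]
    {m : ℕ} (hm : 0 < m) (p : Fin m → Ω → ℝ)
    (I₀ : Finset (Fin m)) (hI₀ : I₀.Nonempty)
    (α : ℝ) (hα₀ : 0 ≤ α) (hα₁ : α ≤ 1)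
    (hsuper : ∀ i ∈ I₀, ∀ t ∈ Set.Icc (0 : ℝ) 1,
      μ {ω | p i ω ≤ t} ≤ ENNReal.ofReal t)
    (σ : Ω → Equiv.Perm (Fin m))
    (hσ : ∀ ω, Monotone fun j : Fin m => p (σ ω j) ω) :
    μ {ω | ∃ i ∈ I₀, ∃ j : Fin m, σ ω j = i ∧
        ∀ j' : Fin m, j' ≤ j → p (σ ω j') ω ≤ α / ((m : ℝ) - (j' : ℕ))} ≤
      ENNReal.ofReal α := by
  set m₀ : ℕ := I₀.card with hm₀
  have hm₀pos : 0 < m₀ := Finset.card_pos.mpr hI₀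
  have hm₀R : (1 : ℝ) ≤ (m₀ : ℝ) := by exact_mod_cast hm₀pos
  -- threshold t = α / m₀
  set t : ℝ := α / m₀ with ht
  have ht0 : 0 ≤ t := div_nonneg hα₀ (by positivity)
  have ht1 : t ≤ 1 := by
    have : t ≤ α := by
      rw [ht, div_le_iff₀ (by positivity)]
      nlinarith
    linarith
  -- Key inclusion: the rejection event is contained in ⋃ i ∈ I₀, {p i ω ≤ t}
  have hsub : {ω | ∃ i ∈ I₀, ∃ j : Fin m, σ ω j = i ∧
        ∀ j' : Fin m, j' ≤ j → p (σ ω j') ω ≤ α / ((m : ℝ) - (j' : ℕ))}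
      ⊆ ⋃ i ∈ I₀, {ω | p i ω ≤ t} := by
    intro ω hω
    obtain ⟨i, hiI₀, j, hσj, hall⟩ := hω
    -- the set of positions ≤ j carrying a true null
    set S : Finset (Fin m) := Finset.univ.filter (fun k => σ ω k ∈ I₀ ∧ k ≤ j) with hS
    have hjS : j ∈ S := by
      simp only [hS, Finset.mem_filter, Finset.mem_univ, true_and]
      exact ⟨hσj ▸ hiI₀, le_refl j⟩
    have hSne : S.Nonempty := ⟨j, hjS⟩
    set j₀ : Fin m := S.min' hSne with hj₀
    have hj₀S : j₀ ∈ S := S.min'_mem hSne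
    have hj₀I : σ ω j₀ ∈ I₀ := (Finset.mem_filter.mp hj₀S).2.1
    have hj₀j : j₀ ≤ j := (Finset.mem_filter.mp hj₀S).2.2
    -- every true null occurs at a position ≥ j₀
    have hpos : ∀ i' ∈ I₀, j₀ ≤ (σ ω).symm i' := by
      intro i' hi'
      by_contra hlt
      push_neg at hlt
      have hle : (σ ω).symm i' ≤ j := le_trans hlt.le hj₀j
      have : (σ ω).symm i' ∈ S := by
        simp only [hS, Finset.mem_filter, Finset.mem_univ, true_and]
        exact ⟨by simpa using hi', hle⟩
      exact absurd (S.min'_le _ this) (not_le.mpr hlt)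
    -- hence m₀ ≤ m - j₀
    have hcard : m₀ ≤ m - (j₀ : ℕ) := by
      have hinj : Set.InjOn (fun i' => (σ ω).symm i') I₀ := fun a _ b _ h =>
        (σ ω).symm.injective h
      have hmaps : ∀ i' ∈ I₀, (σ ω).symm i' ∈ Finset.Ici j₀ := fun i' hi' =>
        Finset.mem_Ici.mpr (hpos i' hi')
      calc m₀ = I₀.card := rfl
        _ ≤ (Finset.Ici j₀).card := Finset.card_le_card_of_injOn _ hmaps hinj
        _ = m - (j₀ : ℕ) := Fin.card_Ici j₀
    -- p (σ ω j₀) ω ≤ α / (m - j₀) ≤ t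
    have hple : p (σ ω j₀) ω ≤ α / ((m : ℝ) - (j₀ : ℕ)) := hall j₀ hj₀j
    have hj₀lt : (j₀ : ℕ) < m := j₀.isLt
    have hcastR : (m₀ : ℝ) ≤ (m : ℝ) - (j₀ : ℕ) := by
      have : (m₀ : ℝ) ≤ ((m - (j₀ : ℕ) : ℕ) : ℝ) := by exact_mod_cast hcard
      rwa [Nat.cast_sub hj₀lt.le] at this
    have hdiv : α / ((m : ℝ) - (j₀ : ℕ)) ≤ t := by
      rw [ht]
      exact div_le_div_of_nonneg_left hα₀ (by exact_mod_cast hm₀pos) hcastR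
    exact Set.mem_biUnion hj₀I (le_trans hple hdiv)
  calc μ {ω | ∃ i ∈ I₀, ∃ j : Fin m, σ ω j = i ∧
        ∀ j' : Fin m, j' ≤ j → p (σ ω j') ω ≤ α / ((m : ℝ) - (j' : ℕ))}
      ≤ μ (⋃ i ∈ I₀, {ω | p i ω ≤ t}) := measure_mono hsub
    _ ≤ ∑ i ∈ I₀, μ {ω | p i ω ≤ t} := measure_biUnion_finset_le I₀ _
    _ ≤ ∑ _i ∈ I₀, ENNReal.ofReal t := by
        exact Finset.sum_le_sum fun i hi => hsuper i hi t ⟨ht0, ht1⟩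
    _ = m₀ • ENNReal.ofReal t := by rw [Finset.sum_const]
    _ = ENNReal.ofReal (m₀ * t) := by
        rw [nsmul_eq_mul, ← ENNReal.ofReal_natCast m₀,
          ← ENNReal.ofReal_mul (by positivity)]
    _ = ENNReal.ofReal α := by
        congr 1
        rw [ht]; field_simp [show (m₀ : ℝ) ≠ 0 by linarith]
end
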